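/- arXiv:1006.4131 — 2 statements merged into one kernel-verified Lean document; each statement's English description precedes it below -/
import Mathlib

section
/- Let a ≤ b be reals and let δ : ℝ → ℝ assign to each point of [a,b] a strictly positive radius. Then there exist a finite partition a = x₀ ≤ x₁ ≤ ⋯ ≤ xₙ = b and tags t₁,…,tₙ with tᵢ ∈ [xᵢ₋₁, xᵢ] such that each subinterval [xᵢ₋₁, xᵢ] is contained in the open interval (tᵢ − δ(tᵢ), tᵢ + δ(tᵢ)). -/
/-- Cousin's theorem: given a positive radius δ(x) at each point of [a,b],
there is a finite tagged partition a = x₀ ≤ x₁ ≤ ⋯ ≤ xₙ = b with tags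
tᵢ ∈ [xᵢ, xᵢ₊₁] such that each subinterval [xᵢ, xᵢ₊₁] is contained in the
open interval (tᵢ − δ(tᵢ), tᵢ + δ(tᵢ)). -/
theorem cousin (a b : ℝ) (hab : a ≤ b) (δ : ℝ → ℝ)
    (hδ : ∀ x ∈ Set.Icc a b, 0 < δ x) :
    ∃ (n : ℕ) (x : ℕ → ℝ) (t : ℕ → ℝ),
      x 0 = a ∧ x n = b ∧ (∀ i < n, x i ≤ x (i + 1)) ∧
      ∀ i < n, t i ∈ Set.Icc (x i) (x (i + 1)) ∧
        Set.Icc (x i) (x (i + 1)) ⊆ Set.Ioo (t i - δ (t i)) (t i + δ (t i)) := by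
  set S : Set ℝ := {c | c ∈ Set.Icc a b ∧
    ∃ (n : ℕ) (x : ℕ → ℝ) (t : ℕ → ℝ),
      x 0 = a ∧ x n = c ∧ (∀ i < n, x i ≤ x (i + 1)) ∧
      ∀ i < n, t i ∈ Set.Icc (x i) (x (i + 1)) ∧
        Set.Icc (x i) (x (i + 1)) ⊆ Set.Ioo (t i - δ (t i)) (t i + δ (t i))} with hS
  have haS : a ∈ S := by
    refine ⟨⟨le_refl a, hab⟩, 0, fun _ => a, fun _ => a, rfl, rfl, ?_, ?_⟩ <;>
      intro i hi <;> exact absurd hi (Nat.not_lt_zero i)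
  have hbdd : BddAbove S := ⟨b, fun c hc => hc.1.2⟩
  have hne : S.Nonempty := ⟨a, haS⟩
  set s := sSup S with hs
  have hsmem : s ∈ Set.Icc a b := ⟨le_csSup hbdd haS, csSup_le hne fun c hc => hc.1.2⟩
  have hδs := hδ s hsmem
  obtain ⟨c, hcS, hcgt⟩ := exists_lt_of_lt_csSup hne (by linarith : s - δ s < s)
  have hcs : c ≤ s := le_csSup hbdd hcS
  set d := min b (s + δ s / 2) with hd
  have hsd : s ≤ d := le_min hsmem.2 (by linarith)
  have hdS : d ∈ S := by
    obtain ⟨⟨hac, hcb⟩, n, x, t, hx0, hxn, hmono, htag⟩ := hcS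
    refine ⟨⟨le_trans hac (le_trans hcs hsd), min_le_left _ _⟩, n + 1,
      fun i => if i ≤ n then x i else d, fun i => if i < n then t i else s, ?_, ?_, ?_, ?_⟩
    · simp [Nat.zero_le, hx0]
    · simp
    · intro i hi
      rcases lt_or_ge i n with h | h
      · simp only [h.le, Nat.succ_le_of_lt h, if_pos]
        exact hmono i h
      · have hin : i = n := le_antisymm (Nat.lt_succ_iff.mp hi) h
        subst hin
        simp only [le_refl, if_pos, Nat.not_succ_le_self, if_neg, not_false_iff]
        rw [hxn]
        exact le_trans hcs hsd
    · intro i hi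
      rcases lt_or_ge i n with h | h
      · simp only [h, h.le, Nat.succ_le_of_lt h, if_pos]
        exact htag i h
      · have hin : i = n := le_antisymm (Nat.lt_succ_iff.mp hi) h
        subst hin
        simp only [le_refl, if_pos, Nat.not_succ_le_self, if_neg, not_false_iff,
          lt_irrefl, hxn]
        constructor
        · exact ⟨hcs, hsd⟩
        · intro y hy
          have h1 : c ≤ y := hy.1
          have h2 : y ≤ d := hy.2
          have h3 : d ≤ s + δ s / 2 := min_le_right _ _
          exact ⟨by linarith, by linarith⟩
  have hds : d ≤ s := le_csSup hbdd hdS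
  have hbs : b ≤ s := by
    by_contra hb
    push_neg at hb
    have : s < d := lt_min hb (by linarith)
    linarith
  have hsb : s = b := le_antisymm hsmem.2 hbs
  have hdb : d = b := by
    rw [hd, hsb]
    exact min_eq_left (by have := hδ b ⟨hab, le_rfl⟩; linarith)
  rw [hdb] at hdS
  exact hdS.2
end

section
/- Let f(x,y) be continuous and bounded on an open domain G ⊆ ℝ². Then for each point (x₀, y₀) ∈ G there exist ε > 0 and a differentiable function y defined on (x₀ − ε, x₀ + ε) with y(x₀) = y₀ and y′(x) = f(x, y(x)) for all x in (x₀ − ε, x₀ + ε). -/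
open Set Metric intervalIntegral MeasureTheory Filter Topology
open scoped NNReal BoundedContinuousFunction

noncomputable def gapp (g : ℝ × ℝ → ℝ) (n : ℕ) (p : ℝ × ℝ) : ℝ :=
  ⨅ q : ℝ × ℝ, (g q + ((n : ℝ) + 1) * dist p q)

section approx

variable {g : ℝ × ℝ → ℝ} {C : ℝ}

lemma gapp_bdd (hgC : ∀ p, |g p| ≤ C) (n : ℕ) (p : ℝ × ℝ) :
    BddBelow (Set.range fun q : ℝ × ℝ => g q + ((n : ℝ) + 1) * dist p q) := by
  refine ⟨-C, ?_⟩
  rintro x ⟨q, rfl⟩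
  have h1 := (abs_le.1 (hgC q)).1
  have h2 : (0:ℝ) ≤ ((n:ℝ)+1) * dist p q := by positivity
  simp only
  linarith

lemma gapp_le (hgC : ∀ p, |g p| ≤ C) (n : ℕ) (p : ℝ × ℝ) : gapp g n p ≤ g p := by
  have := ciInf_le (gapp_bdd hgC n p) p
  simpa [gapp] using this

lemma neg_le_gapp (hgC : ∀ p, |g p| ≤ C) (n : ℕ) (p : ℝ × ℝ) : -C ≤ gapp g n p := by
  refine le_ciInf fun q => ?_
  have h1 := (abs_le.1 (hgC q)).1
  have h2 : (0:ℝ) ≤ ((n:ℝ)+1) * dist p q := by positivity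
  linarith

lemma gapp_sub_le (hgC : ∀ p, |g p| ≤ C) (n : ℕ) (p p' : ℝ × ℝ) :
    gapp g n p ≤ gapp g n p' + ((n : ℝ) + 1) * dist p p' := by
  rw [← sub_le_iff_le_add]
  refine le_ciInf fun q => ?_
  rw [sub_le_iff_le_add]
  refine (ciInf_le (gapp_bdd hgC n p) q).trans ?_
  have h := dist_triangle p p' q
  have hn : (0:ℝ) ≤ (n:ℝ)+1 := by positivity
  nlinarith [dist_comm p p']

lemma gapp_lipschitz (hgC : ∀ p, |g p| ≤ C) (n : ℕ) :
    LipschitzWith ((n : ℝ≥0) + 1) (gapp g n) := by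
  refine LipschitzWith.of_dist_le_mul fun p p' => ?_
  have hc : (((n : ℝ≥0) + 1 : ℝ≥0) : ℝ) = (n : ℝ) + 1 := by push_cast; ring
  rw [hc, Real.dist_eq, abs_sub_le_iff]
  constructor
  · have := gapp_sub_le hgC n p p'
    linarith
  · have := gapp_sub_le hgC n p' p
    rw [dist_comm p' p] at this
    linarith

lemma gapp_cont (hgC : ∀ p, |g p| ≤ C) (n : ℕ) : Continuous (gapp g n) :=
  (gapp_lipschitz hgC n).continuous

end approx

section picard

variable {g : ℝ × ℝ → ℝ} {C : ℝ}

lemma gapp_abs_le (hgC : ∀ p, |g p| ≤ C) (n : ℕ) (p : ℝ × ℝ) : |gapp g n p| ≤ C :=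
  abs_le.2 ⟨neg_le_gapp hgC n p, (gapp_le hgC n p).trans (abs_le.1 (hgC p)).2⟩

lemma exists_sol (hgC : ∀ p, |g p| ≤ C) (hC : 1 ≤ C) (n : ℕ) (x₀ y₀ ε : ℝ) (hε : 0 < ε) :
    ∃ yf : ℝ → ℝ, yf x₀ = y₀ ∧ ∀ t ∈ Icc (x₀ - ε) (x₀ + ε),
      HasDerivWithinAt yf (gapp g n (t, yf t)) (Icc (x₀ - ε) (x₀ + ε)) t := by
  have hC0 : (0:ℝ) ≤ C := le_trans zero_le_one hC
  have hpl : IsPicardLindelof (fun t x => gapp g n (t, x))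
      (⟨x₀, by constructor <;> linarith⟩ : Icc (x₀ - ε) (x₀ + ε)) y₀
      (C * ε).toNNReal 0 C.toNNReal ((n : ℝ≥0) + 1) := by
    constructor
    · intro t _
      refine LipschitzWith.lipschitzOnWith ?_
      have h1 : LipschitzWith 1 (fun x : ℝ => (t, x)) := LipschitzWith.prodMk_left t
      have := (gapp_lipschitz hgC n).comp h1
      simpa [Function.comp_def] using this
    · intro x _
      have h1 : LipschitzWith 1 (fun t : ℝ => (t, x)) :=
        LipschitzWith.prodMk_right x
      exact ((gapp_lipschitz hgC n).comp h1).continuous.continuousOn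
    · intro t _ x _
      rw [Real.norm_eq_abs, Real.coe_toNNReal _ hC0]
      exact gapp_abs_le hgC n _
    · have : max (x₀ + ε - x₀) (x₀ - (x₀ - ε)) = ε := by
        rw [add_sub_cancel_left, sub_sub_cancel, max_self]
      simp only [Real.coe_toNNReal _ hC0, Real.coe_toNNReal _ (mul_nonneg hC0 hε.le),
        NNReal.coe_zero, sub_zero, this, le_refl]
  exact hpl.exists_eq_forall_mem_Icc_hasDerivWithinAt₀

end picard

lemma ftc_icc {a b x₀ x : ℝ} {u w : ℝ → ℝ} (hx₀ : x₀ ∈ Icc a b) (hx : x ∈ Icc a b)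
    (hu : ContinuousOn u (Icc a b)) (hw : ContinuousOn w (Icc a b))
    (hd : ∀ t ∈ Ioo a b, HasDerivAt u (w t) t) :
    u x = u x₀ + ∫ t in x₀..x, w t := by
  rcases le_total x₀ x with h | h
  · have key := intervalIntegral.integral_eq_sub_of_hasDeriv_right_of_le h
      (hu.mono (Icc_subset_Icc hx₀.1 hx.2))
      (fun t ht => (hd t ⟨lt_of_le_of_lt hx₀.1 ht.1, lt_of_lt_of_le ht.2 hx.2⟩).hasDerivWithinAt)
      ((hw.mono (Icc_subset_Icc hx₀.1 hx.2)).intervalIntegrable_of_Icc h)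
    rw [key]; ring
  · have key := intervalIntegral.integral_eq_sub_of_hasDeriv_right_of_le h
      (hu.mono (Icc_subset_Icc hx.1 hx₀.2))
      (fun t ht => (hd t ⟨lt_of_le_of_lt hx.1 ht.1, lt_of_lt_of_le ht.2 hx₀.2⟩).hasDerivWithinAt)
      ((hw.mono (Icc_subset_Icc hx.1 hx₀.2)).intervalIntegrable_of_Icc h)
    rw [intervalIntegral.integral_symm, key]; ring
lemma peano_core {g : ℝ × ℝ → ℝ} {C : ℝ} (hg : Continuous g) (hC : 1 ≤ C)
    (hgC : ∀ p, |g p| ≤ C) (x₀ y₀ ε : ℝ) (hε : 0 < ε) :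
    ∃ y : ℝ → ℝ, y x₀ = y₀ ∧ ∀ x ∈ Icc (x₀ - ε) (x₀ + ε),
      |y x - y₀| ≤ C * |x - x₀| ∧ HasDerivAt y (g (x, y x)) x := by
  have hC0 : (0:ℝ) < C := lt_of_lt_of_le zero_lt_one hC
  set a := x₀ - ε with ha
  set b := x₀ + ε with hb
  have hab : a ≤ b := by rw [ha, hb]; linarith
  have hx₀I : x₀ ∈ Icc a b := ⟨by rw [ha]; linarith, by rw [hb]; linarith⟩
  -- approximate solutions from Picard-Lindelöf
  choose yf hyf0 hyfd using fun n => exists_sol hgC hC n x₀ y₀ ε hε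
  have hyfc : ∀ n, ContinuousOn (yf n) (Icc a b) := fun n t ht =>
    (hyfd n t ht).continuousWithinAt
  -- uniform Lipschitz bound
  have hyflip : ∀ n, ∀ s ∈ Icc a b, ∀ t ∈ Icc a b, |yf n t - yf n s| ≤ C * |t - s| := by
    intro n s hs t ht
    have := Convex.norm_image_sub_le_of_norm_hasDerivWithin_le
      (f := yf n) (f' := fun t => gapp g n (t, yf n t)) (s := Icc a b)
      (fun u hu => hyfd n u hu)
      (fun u _ => by rw [Real.norm_eq_abs]; exact gapp_abs_le hgC n _)
      (convex_Icc a b) hs ht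
    simpa [Real.norm_eq_abs] using this
  have habs : ∀ t ∈ Icc a b, |t - x₀| ≤ ε := by
    rintro t ⟨h1, h2⟩
    rw [ha] at h1; rw [hb] at h2
    rw [abs_le]; constructor <;> linarith
  have hyfb : ∀ n, ∀ t ∈ Icc a b, |yf n t - y₀| ≤ C * ε := by
    intro n t ht
    have h1 := hyflip n x₀ hx₀I t ht
    rw [hyf0] at h1
    exact h1.trans (mul_le_mul_of_nonneg_left (habs t ht) hC0.le)
  -- bundle as bounded continuous functions on the compact interval
  set F : ℕ → (Icc a b →ᵇ ℝ) := fun n =>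
    BoundedContinuousFunction.mkOfCompact
      ⟨(Icc a b).restrict (yf n), continuousOn_iff_continuous_restrict.1 (hyfc n)⟩ with hF
  have hFval : ∀ n (t : Icc a b), F n t = yf n t := fun n t => rfl
  set A : Set (Icc a b →ᵇ ℝ) := Set.range F with hA
  have in_s : ∀ (u : Icc a b →ᵇ ℝ) (t : Icc a b), u ∈ A → u t ∈ closedBall y₀ (C * ε) := by
    rintro u t ⟨n, rfl⟩
    rw [mem_closedBall, hFval, Real.dist_eq]
    exact hyfb n t t.2
  have equi : Equicontinuous ((↑) : A → (Icc a b) → ℝ) := by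
    refine Metric.equicontinuous_of_continuity_modulus (fun d => C * d) ?_ _ ?_
    · have hcm : Continuous fun d : ℝ => C * d := continuous_const.mul continuous_id
      simpa using hcm.tendsto 0
    · rintro s t ⟨u, n, rfl⟩
      rw [hFval, hFval, Real.dist_eq, Subtype.dist_eq, Real.dist_eq]
      exact hyflip n t t.2 s s.2
  have hcompact : IsCompact (closure A) :=
    BoundedContinuousFunction.arzela_ascoli (closedBall y₀ (C * ε))
      (isCompact_closedBall _ _) A in_s equi
  obtain ⟨Y, hYA, φ, hφ, hconv⟩ :=
    hcompact.tendsto_subseq (fun n => subset_closure (Set.mem_range_self n))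
  -- pointwise convergence
  have hpt : ∀ t : Icc a b, Tendsto (fun k => F (φ k) t) atTop (𝓝 (Y t)) := fun t =>
    ((continuous_eval_const (F := Icc a b →ᵇ ℝ) t).tendsto Y).comp hconv
  have hYb : ∀ t : Icc a b, |Y t - y₀| ≤ C * ε := by
    intro t
    have := (Metric.isClosed_closedBall.mem_of_tendsto (hpt t)
      (Filter.Eventually.of_forall fun k => in_s _ t ⟨φ k, rfl⟩) : Y t ∈ closedBall y₀ (C * ε))
    simpa [mem_closedBall, Real.dist_eq] using this
  -- the candidate limit function
  set y : ℝ → ℝ := fun x => Y (projIcc a b hab x) with hy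
  have hyc : Continuous y := Y.continuous.comp continuous_projIcc
  have hyI : ∀ t (ht : t ∈ Icc a b), y t = Y ⟨t, ht⟩ := by
    intro t ht
    rw [hy]; simp only [projIcc_of_mem hab ht]
  have hy0 : y x₀ = y₀ := by
    have h1 : Tendsto (fun k => F (φ k) ⟨x₀, hx₀I⟩) atTop (𝓝 y₀) := by
      have : (fun k => F (φ k) (⟨x₀, hx₀I⟩ : Icc a b)) = fun _ => y₀ := by
        funext k; rw [hFval]; exact hyf0 (φ k)
      rw [this]; exact tendsto_const_nhds
    rw [hyI x₀ hx₀I]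
    exact tendsto_nhds_unique (hpt _) h1
  have hyb : ∀ t ∈ Icc a b, |y t - y₀| ≤ C * ε := by
    intro t ht; rw [hyI t ht]; exact hYb _
  have hdistp : ∀ k t (ht : t ∈ Icc a b), |yf (φ k) t - y t| ≤ dist (F (φ k)) Y := by
    intro k t ht
    have := BoundedContinuousFunction.dist_coe_le_dist (f := F (φ k)) (g := Y) ⟨t, ht⟩
    rw [hFval] at this
    rw [hyI t ht, Real.dist_eq] at *
    exact this
  -- integral equation for approximate solutions
  have heqn : ∀ n, ∀ x ∈ Icc a b, yf n x = y₀ + ∫ t in x₀..x, gapp g n (t, yf n t) := by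
    intro n x hx
    have := ftc_icc (u := yf n) (w := fun t => gapp g n (t, yf n t)) hx₀I hx (hyfc n)
      ((gapp_cont hgC n).comp_continuousOn (continuousOn_id.prodMk (hyfc n)))
      (fun t ht => (hyfd n t (Ioo_subset_Icc_self ht)).hasDerivAt (Icc_mem_nhds ht.1 ht.2))
    rw [this, hyf0]
  -- key limit identity
  have hmemK : ∀ t ∈ Icc a b, ∀ u : ℝ, |u - y₀| ≤ C * ε → (t, u) ∈ closedBall ((x₀, y₀) : ℝ × ℝ) (C * ε) := by
    intro t ht u hu
    rw [mem_closedBall, Prod.dist_eq]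
    refine max_le ?_ ?_
    · rw [Real.dist_eq]
      exact (habs t ht).trans (by nlinarith)
    · rw [Real.dist_eq]; exact hu
  have hkey : ∀ x ∈ Icc a b, y x = y₀ + ∫ t in x₀..x, g (t, y t) := by
    intro x hx
    refine eq_of_forall_dist_le fun δ hδ => ?_
    set δ' := δ / (1 + 2 * ε) with hδ'def
    have hδ' : 0 < δ' := by rw [hδ'def]; positivity
    set K : Set (ℝ × ℝ) := closedBall (x₀, y₀) (C * ε) with hK
    set K₂ : Set (ℝ × ℝ) := closedBall (x₀, y₀) (C * ε + 1) with hK₂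
    have hKK₂ : K ⊆ K₂ := closedBall_subset_closedBall (by linarith)
    have hUC := (isCompact_closedBall ((x₀, y₀) : ℝ × ℝ) (C * ε + 1)).uniformContinuousOn_of_continuous
      hg.continuousOn
    obtain ⟨ρ₀, hρ₀, hmod⟩ := Metric.uniformContinuousOn_iff.1 hUC δ' hδ'
    set ρ := min ρ₀ 1 with hρdef
    have hρ : 0 < ρ := lt_min hρ₀ one_pos
    obtain ⟨N₂, hN₂⟩ := exists_nat_ge (2 * C / ρ)
    obtain ⟨N₁, hN₁⟩ := Metric.tendsto_atTop.1 hconv (min δ' (ρ / 2))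
      (lt_min hδ' (by positivity))
    set k := max N₁ N₂ with hk
    set m := φ k with hm
    have hm2 : 2 * C ≤ ((m : ℝ) + 1) * ρ := by
      have h1 : (N₂ : ℝ) ≤ (m : ℝ) := by
        have : N₂ ≤ m := le_trans (le_max_right N₁ N₂) hφ.le_apply
        exact_mod_cast this
      have h2 := (div_le_iff₀ hρ).1 (hN₂.trans h1)
      nlinarith
    have hFY : dist (F m) Y < min δ' (ρ / 2) := hN₁ k (le_max_left _ _)
    have hmemf : ∀ t ∈ Icc a b, (t, yf m t) ∈ K := fun t ht =>
      hmemK t ht _ (hyfb m t ht)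
    have hmemy : ∀ t ∈ Icc a b, (t, y t) ∈ K := fun t ht =>
      hmemK t ht _ (hyb t ht)
    have hlow : ∀ p ∈ K, g p - δ' ≤ gapp g m p := by
      intro p hp
      refine le_ciInf fun q => ?_
      rcases lt_or_ge (dist p q) ρ with hq | hq
      · have hpK₂ : p ∈ K₂ := hKK₂ hp
        have hqK₂ : q ∈ K₂ := by
          rw [mem_closedBall] at hp ⊢
          have h1 := dist_triangle q p ((x₀, y₀) : ℝ × ℝ)
          have h2 : dist q p < ρ := by rw [dist_comm]; exact hq
          have h3 : ρ ≤ 1 := min_le_right _ _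
          linarith
        have h4 := hmod p hpK₂ q hqK₂ (hq.trans_le (min_le_left _ _))
        rw [Real.dist_eq] at h4
        have h5 := (abs_le.1 h4.le).2
        have h6 : (0:ℝ) ≤ ((m : ℝ) + 1) * dist p q := by positivity
        linarith
      · have h1 := (abs_le.1 (hgC q)).1
        have h2 := (abs_le.1 (hgC p)).2
        have h3 : ((m : ℝ) + 1) * ρ ≤ ((m : ℝ) + 1) * dist p q :=
          mul_le_mul_of_nonneg_left hq (by positivity)
        linarith
    have hib : ∀ t ∈ Icc a b, |gapp g m (t, yf m t) - g (t, y t)| ≤ 2 * δ' := by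
      intro t ht
      have h1 : |gapp g m (t, yf m t) - g (t, yf m t)| ≤ δ' := by
        have hlo := hlow _ (hmemf t ht)
        have hhi := gapp_le hgC m (t, yf m t)
        rw [abs_le]; constructor <;> linarith
      have h2 : |g (t, yf m t) - g (t, y t)| ≤ δ' := by
        have hd : dist ((t, yf m t) : ℝ × ℝ) (t, y t) < ρ₀ := by
          rw [Prod.dist_eq]
          have hd1 : dist (yf m t) (y t) < ρ / 2 := by
            rw [Real.dist_eq]
            exact lt_of_le_of_lt (hdistp k t ht) (hFY.trans_le (min_le_right _ _))
          have h3 : ρ ≤ ρ₀ := min_le_left _ _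
          simp only [dist_self]
          exact max_lt hρ₀ (by linarith)
        have h4 := hmod _ (hKK₂ (hmemf t ht)) _ (hKK₂ (hmemy t ht)) hd
        rw [Real.dist_eq] at h4
        exact h4.le
      calc |gapp g m (t, yf m t) - g (t, y t)|
          ≤ |gapp g m (t, yf m t) - g (t, yf m t)| + |g (t, yf m t) - g (t, y t)| :=
            abs_sub_le _ _ _
        _ ≤ 2 * δ' := by linarith
    have huIcc : Set.uIcc x₀ x ⊆ Icc a b := Set.uIcc_subset_Icc hx₀I hx
    have hInt1 : IntervalIntegrable (fun t => gapp g m (t, yf m t)) volume x₀ x :=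
      (((gapp_cont hgC m).comp_continuousOn (continuousOn_id.prodMk (hyfc m))).mono
        huIcc).intervalIntegrable
    have hInt2 : IntervalIntegrable (fun t => g (t, y t)) volume x₀ x :=
      (hg.comp (continuous_id.prodMk hyc)).intervalIntegrable _ _
    have hIest : |∫ t in x₀..x, (gapp g m (t, yf m t) - g (t, y t))| ≤ 2 * δ' * |x - x₀| := by
      have := intervalIntegral.norm_integral_le_of_norm_le_const (C := 2 * δ')
        (f := fun t => gapp g m (t, yf m t) - g (t, y t)) (a := x₀) (b := x) ?_
      · simpa [Real.norm_eq_abs] using this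
      · intro t ht
        rw [Real.norm_eq_abs]
        exact hib t (huIcc (Set.Ioc_subset_Icc_self ht))
    have hsub : (∫ t in x₀..x, gapp g m (t, yf m t)) - ∫ t in x₀..x, g (t, y t)
        = ∫ t in x₀..x, (gapp g m (t, yf m t) - g (t, y t)) :=
      (intervalIntegral.integral_sub hInt1 hInt2).symm
    have hFx : |yf m x - y x| ≤ δ' :=
      (hdistp k x hx).trans (hFY.trans_le (min_le_left _ _)).le
    have heq := heqn m x hx
    rw [Real.dist_eq]
    have hxb : |x - x₀| ≤ ε := habs x hx
    have hδeq : δ' * (1 + 2 * ε) = δ := by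
      rw [hδ'def]; field_simp
    have h2δ : 2 * δ' * |x - x₀| ≤ 2 * δ' * ε := by nlinarith
    have hmid : |yf m x - (y₀ + ∫ t in x₀..x, g (t, y t))|
        = |(∫ t in x₀..x, gapp g m (t, yf m t)) - ∫ t in x₀..x, g (t, y t)| := by
      rw [heq]; congr 1; ring
    have htri := abs_sub_le (y x) (yf m x) (y₀ + ∫ t in x₀..x, g (t, y t))
    rw [hmid, hsub] at htri
    have h5 : |y x - yf m x| ≤ δ' := by rw [abs_sub_comm]; exact hFx
    have h6 := hIest.trans h2δ
    have hδeq' : δ' + 2 * δ' * ε = δ := by rw [← hδeq]; ring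
    linarith
  -- the solution
  refine ⟨fun x => y₀ + ∫ t in x₀..x, g (t, y t), by simp, fun x hx => ?_⟩
  have hcont : Continuous fun t => g (t, y t) := hg.comp (continuous_id.prodMk hyc)
  constructor
  · have := intervalIntegral.norm_integral_le_of_norm_le_const (C := C)
      (f := fun t => g (t, y t)) (a := x₀) (b := x)
      (fun t _ => by rw [Real.norm_eq_abs]; exact hgC _)
    simpa [Real.norm_eq_abs, abs_sub_comm x x₀] using this
  · have hder : HasDerivAt (fun u => y₀ + ∫ t in x₀..u, g (t, y t)) (g (x, y x)) x := by
      have := intervalIntegral.integral_hasDerivAt_right (hcont.intervalIntegrable x₀ x)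
        (hcont.stronglyMeasurableAtFilter volume (𝓝 x)) hcont.continuousAt
      exact this.const_add y₀
    have hyx : y x = y₀ + ∫ t in x₀..x, g (t, y t) := hkey x hx
    rw [hyx] at hder
    exact hder

/-- Peano's existence theorem: if f is continuous and bounded on an open
domain G ⊆ ℝ², then through each point (x₀, y₀) of G there passes at least one
integral curve of dy/dx = f(x, y). -/
theorem peano_existence (G : Set (ℝ × ℝ)) (hG : IsOpen G) (f : ℝ × ℝ → ℝ)
    (hcont : ContinuousOn f G) (hbdd : ∃ M : ℝ, ∀ p ∈ G, |f p| ≤ M)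
    (x₀ y₀ : ℝ) (hmem : (x₀, y₀) ∈ G) :
    ∃ ε > 0, ∃ y : ℝ → ℝ, y x₀ = y₀ ∧
      ∀ x ∈ Set.Ioo (x₀ - ε) (x₀ + ε),
        (x, y x) ∈ G ∧ HasDerivAt y (f (x, y x)) x := by
  obtain ⟨M, hM⟩ := hbdd
  set C : ℝ := max M 1 with hC
  have hC1 : 1 ≤ C := le_max_right _ _
  have hC0 : (0:ℝ) < C := lt_of_lt_of_le zero_lt_one hC1
  obtain ⟨r, hr, hball⟩ := Metric.isOpen_iff.1 hG _ hmem
  set b : ℝ := r / 2 with hbdef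
  have hb : 0 < b := by positivity
  have hbG : closedBall ((x₀, y₀) : ℝ × ℝ) b ⊆ G :=
    (closedBall_subset_ball (by rw [hbdef]; linarith)).trans hball
  -- clamping projection onto the closed square
  set proj : ℝ × ℝ → ℝ × ℝ := fun p =>
    (x₀ + max (-b) (min b (p.1 - x₀)), y₀ + max (-b) (min b (p.2 - y₀))) with hproj
  have hclamp : ∀ t : ℝ, |max (-b) (min b t)| ≤ b := by
    intro t
    rw [abs_le]
    exact ⟨le_max_left _ _, max_le (by linarith) (min_le_left _ _)⟩
  have hprojmem : ∀ p, proj p ∈ closedBall ((x₀, y₀) : ℝ × ℝ) b := by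
    intro p
    rw [mem_closedBall, Prod.dist_eq]
    refine max_le ?_ ?_ <;>
      · rw [Real.dist_eq]
        simpa [proj] using hclamp _
  have hprojid : ∀ p ∈ closedBall ((x₀, y₀) : ℝ × ℝ) b, proj p = p := by
    rintro ⟨p1, p2⟩ hp
    rw [mem_closedBall, Prod.dist_eq, max_le_iff, Real.dist_eq, Real.dist_eq] at hp
    obtain ⟨h1, h2⟩ := hp
    rw [abs_le] at h1 h2
    have e1 : max (-b) (min b (p1 - x₀)) = p1 - x₀ := by
      rw [min_eq_right (by linarith), max_eq_right (by linarith)]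
    have e2 : max (-b) (min b (p2 - y₀)) = p2 - y₀ := by
      rw [min_eq_right (by linarith), max_eq_right (by linarith)]
    rw [hproj]
    simp only [e1, e2]
    rw [Prod.mk.injEq]
    constructor <;> ring
  have hprojcont : Continuous proj := by
    rw [hproj]; fun_prop
  set g : ℝ × ℝ → ℝ := fun p => f (proj p) with hg
  have hgcont : Continuous g :=
    hcont.comp_continuous hprojcont fun p => hbG (hprojmem p)
  have hgC : ∀ p, |g p| ≤ C := fun p =>
    (hM _ (hbG (hprojmem p))).trans (le_max_left _ _)
  set ε : ℝ := b / C with hε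
  have hε0 : 0 < ε := by positivity
  have hCε : C * ε = b := by
    rw [hε]; field_simp
  have hεb : ε ≤ b := by
    rw [hε]
    exact div_le_self hb.le hC1
  obtain ⟨y, hy0, hysol⟩ := peano_core hgcont hC1 hgC x₀ y₀ ε hε0
  refine ⟨ε, hε0, y, hy0, fun x hx => ?_⟩
  obtain ⟨hyb, hyd⟩ := hysol x (Set.Ioo_subset_Icc_self hx)
  have hxb : |x - x₀| ≤ ε := by
    rw [abs_le]
    exact ⟨by linarith [hx.1], by linarith [hx.2]⟩
  have hmemb : ((x, y x) : ℝ × ℝ) ∈ closedBall ((x₀, y₀) : ℝ × ℝ) b := by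
    rw [mem_closedBall, Prod.dist_eq]
    refine max_le ?_ ?_
    · rw [Real.dist_eq]; linarith
    · rw [Real.dist_eq]
      calc |y x - y₀| ≤ C * |x - x₀| := hyb
        _ ≤ C * ε := mul_le_mul_of_nonneg_left hxb hC0.le
        _ = b := hCε
  refine ⟨hbG hmemb, ?_⟩
  have : g (x, y x) = f (x, y x) := by rw [hg]; simp only [hprojid _ hmemb]
  rwa [this] at hyd
end
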